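/- Assume C/R^α < 1/2 and κρ + C/R^α < ρ. Then T(Ω) ⊆ Ω, and for every (x₀, y₀) ∈ Ω, writing (xₙ, yₙ) = Tⁿ(x₀, y₀), one has: Re xₙ ≥ Re x₀ + n/2 for all n ≥ 0, xₙ/n → 1 as n → ∞, and ‖yₙ‖ → 0 as n → ∞. -/

import Mathlib

open Filter Topology

theorem stmt10 {E : Type*} [NormedAddCommGroup E] [NormedSpace ℂ E] [CompleteSpace E]
    (α κ C ρ R : ℝ) (hα : 0 < α) (hκ0 : 0 < κ) (hκ1 : κ < 1) (hC : 0 < C)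
    (hρ : 0 < ρ) (hR : 0 < R)
    (Ω : Set (ℂ × E)) (hΩ : Ω = {p : ℂ × E | R < p.1.re ∧ ‖p.2‖ < ρ})
    (G : E → E) (hG0 : G 0 = 0) (hGκ : ∀ y : E, ‖y‖ < ρ → ‖G y‖ ≤ κ * ‖y‖)
    (u : ℂ × E → ℂ) (w : ℂ × E → E)
    (hu : ∀ p ∈ Ω, ‖u p‖ ≤ C / ‖p.1‖ ^ α)
    (hw : ∀ p ∈ Ω, ‖w p‖ ≤ C / ‖p.1‖ ^ α)
    (T : ℂ × E → ℂ × E) (hT : ∀ p ∈ Ω, T p = (p.1 + 1 + u p, G p.2 + w p))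
    (h1 : C / R ^ α < 1 / 2) (h2 : κ * ρ + C / R ^ α < ρ) :
    Set.MapsTo T Ω Ω ∧
    ∀ p ∈ Ω,
      (∀ n : ℕ, p.1.re + n / 2 ≤ ((T^[n] p).1).re) ∧
      Tendsto (fun n : ℕ => (T^[n] p).1 / (n : ℂ)) atTop (𝓝 1) ∧
      Tendsto (fun n : ℕ => ‖(T^[n] p).2‖) atTop (𝓝 0) := by
  have hRα : (0:ℝ) < R ^ α := Real.rpow_pos_of_pos hR α
  have habs_re : ∀ z : ℂ, z.re ≤ ‖z‖ := fun z =>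
    (le_abs_self _).trans (Complex.abs_re_le_norm z)
  -- bound C/‖x‖^α ≤ C/R^α on Ω
  have hbound : ∀ p ∈ Ω, C / ‖p.1‖ ^ α ≤ C / R ^ α := by
    intro p hp
    rw [hΩ] at hp
    have hx : R ≤ ‖p.1‖ := hp.1.le.trans (habs_re _)
    exact div_le_div_of_nonneg_left hC.le hRα (Real.rpow_le_rpow hR.le hx hα.le)
  -- key one-step estimate
  have key : ∀ p ∈ Ω, T p ∈ Ω ∧ p.1.re + 1/2 ≤ (T p).1.re ∧
      ‖(T p).2‖ ≤ κ * ‖p.2‖ + C / ‖p.1‖ ^ α := by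
    intro p hp
    have hmem := hp; rw [hΩ] at hmem
    have hu' := (hu p hp).trans (hbound p hp)
    have hw' := hw p hp
    have hw'' := hw'.trans (hbound p hp)
    have hure : -(1/2 : ℝ) ≤ (u p).re := by
      have : (-(u p)).re ≤ ‖-(u p)‖ := habs_re _
      simp only [Complex.neg_re, norm_neg] at this
      linarith
    rw [hT p hp]
    have hre : p.1.re + 1/2 ≤ (p.1 + 1 + u p).re := by
      simp only [Complex.add_re, Complex.one_re]
      linarith
    have hy2 : ‖G p.2 + w p‖ ≤ κ * ‖p.2‖ + C / ‖p.1‖ ^ α :=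
      (norm_add_le _ _).trans (add_le_add (hGκ _ hmem.2) hw')
    refine ⟨?_, hre, hy2⟩
    rw [hΩ]
    refine ⟨by simp only; linarith [hmem.1], ?_⟩
    have : κ * ‖p.2‖ ≤ κ * ρ := mul_le_mul_of_nonneg_left hmem.2.le hκ0.le
    calc ‖G p.2 + w p‖ ≤ κ * ‖p.2‖ + C / ‖p.1‖ ^ α := hy2
      _ ≤ κ * ρ + C / R ^ α := add_le_add this (hbound p hp)
      _ < ρ := h2
  have hMapsTo : Set.MapsTo T Ω Ω := fun p hp => (key p hp).1
  refine ⟨hMapsTo, ?_⟩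
  intro p hp
  set q : ℕ → ℂ × E := fun n => T^[n] p with hq
  -- membership and real-part growth
  have hmem : ∀ n : ℕ, q n ∈ Ω ∧ p.1.re + n / 2 ≤ (q n).1.re := by
    intro n
    induction n with
    | zero => exact ⟨by simpa [hq] using hp, by simp [hq]⟩
    | succ n ih =>
      have hk := key (q n) ih.1
      have : q (n+1) = T (q n) := Function.iterate_succ_apply' T n p
      rw [this]
      refine ⟨hk.1, ?_⟩
      push_cast
      linarith [ih.2, hk.2.1]
  -- norm lower bound on first coordinate
  have hxnorm : ∀ n : ℕ, R + n / 2 ≤ ‖(q n).1‖ := by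
    intro n
    have h0 := (hmem n).2
    have hRe : R < p.1.re := by
      have := hp; rw [hΩ] at this; exact this.1
    have := habs_re (q n).1
    linarith
  -- the decreasing sequence D
  set D : ℕ → ℝ := fun n => C / (R + n / 2) ^ α with hD
  have hDpos : ∀ n : ℕ, 0 < R + (n:ℝ) / 2 := by
    intro n
    positivity
  have hD' : ∀ n : ℕ, C / ‖(q n).1‖ ^ α ≤ D n := by
    intro n
    exact div_le_div_of_nonneg_left hC.le (Real.rpow_pos_of_pos (hDpos n) α)
      (Real.rpow_le_rpow (hDpos n).le (hxnorm n) hα.le)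
  have hDanti : ∀ m n : ℕ, m ≤ n → D n ≤ D m := by
    intro m n hmn
    refine div_le_div_of_nonneg_left hC.le (Real.rpow_pos_of_pos (hDpos m) α)
      (Real.rpow_le_rpow (hDpos m).le ?_ hα.le)
    have : (m:ℝ) ≤ n := Nat.cast_le.mpr hmn
    linarith
  have hD0 : Tendsto D atTop (𝓝 0) := by
    have hden : Tendsto (fun n : ℕ => (R + (n:ℝ) / 2) ^ α) atTop atTop := by
      apply (tendsto_rpow_atTop hα).comp
      apply tendsto_atTop_add_const_left
      exact (tendsto_natCast_atTop_atTop).atTop_div_const (by norm_num)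
    exact tendsto_const_nhds.div_atTop hden
  have hDnonneg : ∀ n : ℕ, 0 ≤ D n := fun n =>
    div_nonneg hC.le (Real.rpow_pos_of_pos (hDpos n) α).le
  -- part (a)
  have parta : ∀ n : ℕ, p.1.re + n / 2 ≤ ((T^[n] p).1).re := fun n => (hmem n).2
  refine ⟨parta, ?_, ?_⟩
  · -- part (b): xₙ/n → 1
    have hu0 : Tendsto (fun k : ℕ => u (q k)) atTop (𝓝 0) := by
      apply squeeze_zero_norm (fun k => (hu _ (hmem k).1).trans (hD' k)) hD0
    set S : ℕ → ℂ := fun n => ∑ k ∈ Finset.range n, u (q k) with hS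
    have hxid : ∀ n : ℕ, (q n).1 = p.1 + n + S n := by
      intro n
      induction n with
      | zero => simp [hS, hq]
      | succ n ih =>
        have h1' : q (n+1) = T (q n) := Function.iterate_succ_apply' T n p
        rw [h1', hT _ (hmem n).1]
        simp only [hS, Finset.sum_range_succ]
        rw [ih]
        push_cast
        ring
    have hcesaro : Tendsto (fun n : ℕ => ((n:ℝ))⁻¹ • S n) atTop (𝓝 0) := by
      simpa using hu0.cesaro_smul
    have hinv : Tendsto (fun n : ℕ => ((n:ℂ))⁻¹) atTop (𝓝 0) := by
      rw [tendsto_zero_iff_norm_tendsto_zero]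
      have := tendsto_inv_atTop_zero.comp (tendsto_natCast_atTop_atTop (R := ℝ))
      simpa [Function.comp_def] using this
    have hmain : Tendsto (fun n : ℕ => p.1 * ((n:ℂ))⁻¹ + 1 + ((n:ℝ))⁻¹ • S n)
        atTop (𝓝 (p.1 * 0 + 1 + 0)) :=
      ((hinv.const_mul p.1).add tendsto_const_nhds).add hcesaro
    rw [show (1 : ℂ) = p.1 * 0 + 1 + 0 by ring]
    apply hmain.congr'
    filter_upwards [eventually_ge_atTop 1] with n hn
    have hne : (n:ℂ) ≠ 0 := Nat.cast_ne_zero.mpr (by omega)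
    rw [hxid n, Complex.real_smul]
    push_cast
    field_simp
  · -- part (c): ‖yₙ‖ → 0
    have hrec : ∀ m n : ℕ, m ≤ n → ‖(q n).2‖ ≤ κ ^ (n - m) * ρ + D m / (1 - κ) := by
      intro m n hmn
      induction n, hmn using Nat.le_induction with
      | base =>
        have hρm : ‖(q m).2‖ < ρ := by
          have := (hmem m).1; rw [hΩ] at this; exact this.2
        have : 0 ≤ D m / (1 - κ) := div_nonneg (hDnonneg m) (by linarith)
        simpa using (by linarith : ‖(q m).2‖ ≤ 1 * ρ + D m / (1 - κ))
      | succ n hmn ih =>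
        have h1' : q (n+1) = T (q n) := Function.iterate_succ_apply' T n p
        have hk := (key (q n) (hmem n).1).2.2
        have hwn : C / ‖(q n).1‖ ^ α ≤ D m := (hD' n).trans (hDanti m n hmn)
        have hpow : κ ^ (n + 1 - m) = κ ^ (n - m) * κ := by
          rw [Nat.succ_sub hmn, pow_succ]
        have hmul : κ * ‖(q n).2‖ ≤ κ * (κ ^ (n - m) * ρ + D m / (1 - κ)) :=
          mul_le_mul_of_nonneg_left ih hκ0.le
        have h1κ : (0:ℝ) < 1 - κ := by linarith
        have ht : κ * (D m / (1 - κ)) + D m = D m / (1 - κ) := by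
          rw [eq_div_iff h1κ.ne', add_mul, mul_assoc, div_mul_cancel₀ _ h1κ.ne']
          ring
        have hκn : (0:ℝ) ≤ κ ^ (n - m) := pow_nonneg hκ0.le _
        rw [h1', hpow]
        nlinarith [hk]
    have hhalf : Tendsto (fun n : ℕ => n / 2) atTop atTop :=
      tendsto_atTop_atTop.mpr fun b => ⟨2 * b, fun n hn => by omega⟩
    have hg : Tendsto (fun n : ℕ => κ ^ (n / 2) * ρ + D (n / 2) / (1 - κ)) atTop (𝓝 0) := by
      have hp1 : Tendsto (fun n : ℕ => κ ^ (n / 2) * ρ) atTop (𝓝 0) := by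
        have := (tendsto_pow_atTop_nhds_zero_of_lt_one hκ0.le hκ1).comp hhalf
        simpa using this.mul_const ρ
      have hp2 : Tendsto (fun n : ℕ => D (n / 2) / (1 - κ)) atTop (𝓝 0) := by
        have := (hD0.comp hhalf).div_const (1 - κ)
        simpa using this
      simpa using hp1.add hp2
    apply squeeze_zero (fun n => norm_nonneg _) ?_ hg
    intro n
    have h := hrec (n / 2) n (Nat.div_le_self n 2)
    have hκpow : κ ^ (n - n / 2) ≤ κ ^ (n / 2) :=
      pow_le_pow_of_le_one hκ0.le hκ1.le (by omega)
    have : κ ^ (n - n / 2) * ρ ≤ κ ^ (n / 2) * ρ :=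
      mul_le_mul_of_nonneg_right hκpow hρ.le
    linarith
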